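/- Fix integers d ≥ 1, r ≥ 1. Let (a,b) ∈ ℤ^d × ℤ^r satisfy a₁ + ⋯ + a_d = min(b₁,…,b_r), and define f : ℤ^d × ℤ^r → ℤ by f(u,w) = ⟨a,u⟩ + ⟨b,w⟩ (the standard inner products). Then for all (u,w), (u',w') ∈ ℤ^d × ℤ^r with min(u₁,…,u_d) = 0 and min(u'₁,…,u'_d) = 0, setting m = min_{j}(u_j + u'_j), one has f(u,w) + f(u',w') = min_{i ∈ [r]} f( u + u' − m·𝟙, w + w' + m·εᵢ ). -/
import Mathlib


/-- Minimum of the coordinates of an integer vector indexed by `Fin (n+1)`. -/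
def mmin {n : ℕ} (u : Fin (n + 1) → ℤ) : ℤ :=
  Finset.univ.inf' ⟨0, Finset.mem_univ 0⟩ u

theorem stmt8 (d r : ℕ) (a : Fin (d + 1) → ℤ) (b : Fin (r + 1) → ℤ)
    (hab : ∑ j, a j = mmin b)
    (u u' : Fin (d + 1) → ℤ) (w w' : Fin (r + 1) → ℤ)
    (hu : mmin u = 0) (hu' : mmin u' = 0) :
    ((∑ j, a j * u j) + ∑ k, b k * w k) + ((∑ j, a j * u' j) + ∑ k, b k * w' k) =
      Finset.univ.inf' ⟨0, Finset.mem_univ 0⟩ (fun i : Fin (r + 1) =>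
        (∑ j, a j * (u j + u' j - mmin (u + u'))) +
          ∑ k, b k * (w k + w' k + if k = i then mmin (u + u') else 0)) := by
  set m := mmin (u + u') with hmdef
  set L := ((∑ j, a j * u j) + ∑ k, b k * w k) +
    ((∑ j, a j * u' j) + ∑ k, b k * w' k) with hL
  -- m ≥ 0
  have hm : 0 ≤ m := by
    rw [hmdef, mmin]
    apply Finset.le_inf'
    intro j _
    have h1 : 0 ≤ u j := by
      rw [← hu, mmin]; exact Finset.inf'_le _ (Finset.mem_univ j)
    have h2 : 0 ≤ u' j := by
      rw [← hu', mmin]; exact Finset.inf'_le _ (Finset.mem_univ j)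
    simpa using add_nonneg h1 h2
  -- rewrite each entry of the inf'
  have hentry : ∀ i : Fin (r + 1),
      ((∑ j, a j * (u j + u' j - m)) +
        ∑ k, b k * (w k + w' k + if k = i then m else 0)) =
      L + m * (b i - mmin b) := by
    intro i
    have h1 : (∑ j, a j * (u j + u' j - m)) =
        (∑ j, a j * u j) + (∑ j, a j * u' j) - (∑ j, a j) * m := by
      rw [Finset.sum_mul, ← Finset.sum_add_distrib, ← Finset.sum_sub_distrib]
      apply Finset.sum_congr rfl
      intros; ring
    have h2 : (∑ k, b k * (w k + w' k + if k = i then m else 0)) =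
        (∑ k, b k * w k) + (∑ k, b k * w' k) + b i * m := by
      have : ∀ k, b k * (w k + w' k + if k = i then m else 0) =
          b k * w k + b k * w' k + (if k = i then b k * m else 0) := by
        intro k; by_cases h : k = i <;> simp [h] <;> ring
      simp only [this, Finset.sum_add_distrib]
      rw [Finset.sum_ite_eq' Finset.univ i (fun k => b k * m)]
      simp
    rw [h1, h2, hab, hL]; ring
  rw [show (fun i : Fin (r + 1) =>
        (∑ j, a j * (u j + u' j - m)) +
          ∑ k, b k * (w k + w' k + if k = i then m else 0)) =
      fun i => L + m * (b i - mmin b) from funext hentry]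
  -- now inf' of L + m*(b i - mmin b) equals L
  obtain ⟨i0, -, hi0⟩ := Finset.exists_mem_eq_inf' (⟨0, Finset.mem_univ 0⟩ :
    Finset.univ.Nonempty) b
  apply le_antisymm
  · apply Finset.le_inf'
    intro i _
    have hb : mmin b ≤ b i := by
      rw [mmin]; exact Finset.inf'_le _ (Finset.mem_univ i)
    nlinarith [mul_nonneg hm (sub_nonneg.mpr hb)]
  · calc Finset.univ.inf' _ (fun i => L + m * (b i - mmin b))
        ≤ L + m * (b i0 - mmin b) := Finset.inf'_le _ (Finset.mem_univ i0)
      _ = L := by rw [mmin, ← hi0]; ring
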